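/- A 3×3 real matrix K with all entries strictly positive is diagonally equivalent to a symmetric matrix if and only if K(1,2)K(2,3)K(3,1) = K(2,1)K(1,3)K(3,2). -/

import Mathlib

lemma diag_inv_aux (v : Fin 3 → ℝ) (hv : ∀ i, v i ≠ 0) :
    (Matrix.diagonal v)⁻¹ = Matrix.diagonal (fun i => (v i)⁻¹) := by
  apply Matrix.inv_eq_right_inv
  rw [Matrix.diagonal_mul_diagonal]
  simp only [mul_inv_cancel₀ (hv _)]
  exact Matrix.diagonal_one

lemma conj_apply (K : Matrix (Fin 3) (Fin 3) ℝ) (v : Fin 3 → ℝ) (hv : ∀ i, v i ≠ 0)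
    (i j : Fin 3) :
    (Matrix.diagonal v * K * (Matrix.diagonal v)⁻¹) i j = v i * K i j * (v j)⁻¹ := by
  rw [diag_inv_aux v hv, Matrix.mul_diagonal, Matrix.diagonal_mul]

/-- A `3 × 3` matrix with strictly positive entries is diagonally equivalent to a
symmetric matrix iff `K(1,2)K(2,3)K(3,1) = K(2,1)K(1,3)K(3,2)`. -/
theorem stmt_4 (K : Matrix (Fin 3) (Fin 3) ℝ) (hK : ∀ i j, 0 < K i j) :
    (∃ D : Matrix (Fin 3) (Fin 3) ℝ, D.IsDiag ∧ (∀ i, D i i ≠ 0) ∧ (D * K * D⁻¹).IsSymm)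
      ↔ K 0 1 * K 1 2 * K 2 0 = K 1 0 * K 0 2 * K 2 1 := by
  constructor
  · rintro ⟨D, hdiag, hne, hsymm⟩
    set v : Fin 3 → ℝ := fun i => D i i with hv
    have hD : Matrix.diagonal v = D := hdiag.diagonal_diag
    have key : ∀ i j, v i * K i j * (v j)⁻¹ = v j * K j i * (v i)⁻¹ := by
      intro i j
      rw [← hD] at hsymm
      rw [← conj_apply K v hne, ← conj_apply K v hne]
      exact (hsymm.apply j i)
    have key2 : ∀ i j, v i ^ 2 * K i j = v j ^ 2 * K j i := by
      intro i j
      have h := key i j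
      have hvi : v i ≠ 0 := hne i; have hvj : v j ≠ 0 := hne j
      field_simp at h
      nlinarith [h]
    have h01 := key2 0 1
    have h12 := key2 1 2
    have h20 := key2 2 0
    have big : (v 0 ^ 2 * K 0 1) * (v 1 ^ 2 * K 1 2) * (v 2 ^ 2 * K 2 0)
        = (v 1 ^ 2 * K 1 0) * (v 2 ^ 2 * K 2 1) * (v 0 ^ 2 * K 0 2) := by
      rw [h01, h12, h20]
    have h0 := hne 0; have h1 := hne 1; have h2 := hne 2
    have hprod : (0:ℝ) < v 0 ^ 2 * v 1 ^ 2 * v 2 ^ 2 := by positivity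
    have hmul : v 0 ^ 2 * v 1 ^ 2 * v 2 ^ 2 * (K 0 1 * K 1 2 * K 2 0)
        = v 0 ^ 2 * v 1 ^ 2 * v 2 ^ 2 * (K 1 0 * K 0 2 * K 2 1) := by
      linear_combination big
    exact mul_left_cancel₀ (ne_of_gt hprod) hmul
  · intro h
    have h10 := hK 1 0
    have h20 := hK 2 0
    have h01 := hK 0 1
    have h02 := hK 0 2
    have h12 := hK 1 2
    have h21 := hK 2 1
    set a : ℝ := Real.sqrt (K 0 1 / K 1 0) with ha
    set b : ℝ := Real.sqrt (K 0 2 / K 2 0) with hb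
    have hapos : 0 < a := Real.sqrt_pos.2 (by positivity)
    have hbpos : 0 < b := Real.sqrt_pos.2 (by positivity)
    have ha2 : a ^ 2 = K 0 1 / K 1 0 := Real.sq_sqrt (by positivity)
    have hb2 : b ^ 2 = K 0 2 / K 2 0 := Real.sq_sqrt (by positivity)
    have e1 : a ^ 2 * K 1 0 = K 0 1 := by
      rw [ha2]; field_simp
    have e2 : b ^ 2 * K 2 0 = K 0 2 := by
      rw [hb2]; field_simp
    have e3 : a ^ 2 * K 1 2 = b ^ 2 * K 2 1 := by
      rw [ha2, hb2, div_mul_eq_mul_div, div_mul_eq_mul_div,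
        div_eq_div_iff (ne_of_gt h10) (ne_of_gt h20)]
      linear_combination h
    set v : Fin 3 → ℝ := ![1, a, b] with hvdef
    have hne : ∀ i, v i ≠ 0 := by
      intro i
      fin_cases i <;> rw [hvdef]
      · show (1:ℝ) ≠ 0; norm_num
      · show a ≠ 0; exact ne_of_gt hapos
      · show b ≠ 0; exact ne_of_gt hbpos
    refine ⟨Matrix.diagonal v, Matrix.isDiag_diagonal v, fun i => by simpa using hne i, ?_⟩
    have key2 : ∀ i j : Fin 3, v i ^ 2 * K i j = v j ^ 2 * K j i := by
      intro i j
      fin_cases i <;> fin_cases j <;> rw [hvdef]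
      · show (1:ℝ) ^ 2 * K 0 1 = a ^ 2 * K 1 0
        rw [one_pow, one_mul, e1]
      · show (1:ℝ) ^ 2 * K 0 2 = b ^ 2 * K 2 0
        rw [one_pow, one_mul, e2]
      · show a ^ 2 * K 1 0 = (1:ℝ) ^ 2 * K 0 1
        rw [one_pow, one_mul, e1]
      · show a ^ 2 * K 1 2 = b ^ 2 * K 2 1
        exact e3
      · show b ^ 2 * K 2 0 = (1:ℝ) ^ 2 * K 0 2
        rw [one_pow, one_mul, e2]
      · show b ^ 2 * K 2 1 = a ^ 2 * K 1 2
        exact e3.symm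
    rw [Matrix.IsSymm]
    ext i j
    rw [Matrix.transpose_apply, conj_apply K v hne, conj_apply K v hne]
    have hkij := key2 i j
    have hvi := hne i; have hvj := hne j
    field_simp
    linear_combination -hkij
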